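/- Let R be a commutative ring, let n ≥ 2 be an integer, let t_1, …, t_n ∈ R, and let p ≥ n−1 be an integer. Let F be the n×n matrix over R whose i-th row is (1, t_i, t_i², …, t_i^{n−2}, t_i^p). Then det F = h_{p+1−n}(t_1, …, t_n) · ∏_{1 ≤ i < j ≤ n} (t_j − t_i). -/

import Mathlib

noncomputable section

/-- The `k`-th complete homogeneous symmetric polynomial evaluated at `t_1, …, t_n`:
the sum of all monomials of total degree `k`, each appearing exactly once. -/
def hsym {R : Type*} [CommRing R] {n : ℕ} (t : Fin n → R) (k : ℕ) : R :=
  ∑ d ∈ Finset.Nat.antidiagonalTuple n k, ∏ i, t i ^ d i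

section Aux

open Polynomial PowerSeries Finset

variable {R : Type*} [CommRing R]

lemma det_updateColumn_sum {m : Type*} [DecidableEq m] [Fintype m] (A : Matrix m m R) (idx : m)
    {ι : Type*} (s : Finset ι) (f : ι → m → R) :
    (A.updateCol idx (fun i => ∑ j ∈ s, f j i)).det = ∑ j ∈ s, (A.updateCol idx (f j)).det := by
  classical
  induction s using Finset.induction with
  | empty =>
    simp only [Finset.sum_empty]
    exact Matrix.det_eq_zero_of_column_eq_zero idx (fun i => by simp)
  | insert a s' h ih =>
    simp only [Finset.sum_insert h]
    rw [← ih]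
    exact Matrix.det_updateCol_add A idx _ _

lemma geom_inv (a : R) :
    ((1 : R⟦X⟧) - PowerSeries.C a * PowerSeries.X) * PowerSeries.mk (fun m => a ^ m) = 1 := by
  ext k
  cases k with
  | zero => simp
  | succ k =>
    rw [sub_mul, one_mul]
    simp [mul_assoc, PowerSeries.coeff_succ_X_mul, pow_succ]; ring

lemma coeff_prod_mk {n : ℕ} (t : Fin n → R) (m : ℕ) :
    (PowerSeries.coeff m) (∏ i : Fin n, PowerSeries.mk fun k => t i ^ k)
      = ∑ d ∈ Finset.Nat.antidiagonalTuple n m, ∏ i, t i ^ d i := by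
  rw [PowerSeries.coeff_prod]
  refine Finset.sum_nbij' (fun l => ⇑l) (fun f => Finsupp.equivFunOnFinite.symm f)
    ?_ ?_ ?_ ?_ ?_
  · intro l hl
    rw [Finset.mem_finsuppAntidiag] at hl
    rw [Finset.Nat.mem_antidiagonalTuple]
    rw [← hl.1]
  · intro f hf
    rw [Finset.Nat.mem_antidiagonalTuple] at hf
    rw [Finset.mem_finsuppAntidiag]
    constructor
    · rw [← hf]
      exact Finset.sum_congr rfl fun i _ => congrFun rfl i
    · exact Finset.subset_univ _
  · intro l _; exact Finsupp.equivFunOnFinite.symm_apply_apply l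
  · intro f _; rfl
  · intro l _
    exact Finset.prod_congr rfl fun i _ => by rw [PowerSeries.coeff_mk]

lemma P_mul_H (n : ℕ) (t : Fin n → R) :
    ((∏ i : Fin n, (1 - Polynomial.C (t i) * Polynomial.X) : R[X]) : R⟦X⟧)
      * ∏ i : Fin n, PowerSeries.mk (fun k => t i ^ k) = 1 := by
  have hc : ((∏ i : Fin n, (1 - Polynomial.C (t i) * Polynomial.X) : R[X]) : R⟦X⟧)
      = ∏ i : Fin n, ((1 : R⟦X⟧) - PowerSeries.C (t i) * PowerSeries.X) := by
    have : ((∏ i : Fin n, (1 - Polynomial.C (t i) * Polynomial.X) : R[X]) : R⟦X⟧)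
        = Polynomial.coeToPowerSeries.ringHom (∏ i : Fin n, (1 - Polynomial.C (t i) * Polynomial.X)) := rfl
    rw [this, map_prod]
    refine Finset.prod_congr rfl fun i _ => ?_
    simp [Polynomial.coeToPowerSeries.ringHom_apply]
  rw [hc, ← Finset.prod_mul_distrib]
  rw [Finset.prod_eq_one]
  intro i _
  exact geom_inv (t i)

/-- the key h-recurrence -/
lemma h_rec (n : ℕ) (t : Fin n → R) (m : ℕ) :
    ∑ k ∈ Finset.range (m + 1),
        (∏ i : Fin n, (1 - Polynomial.C (t i) * Polynomial.X)).coeff k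
          * (∑ d ∈ Finset.Nat.antidiagonalTuple n (m - k), ∏ i, t i ^ d i)
      = if m = 0 then 1 else 0 := by
  have := congrArg (PowerSeries.coeff m) (P_mul_H n t)
  rw [PowerSeries.coeff_mul, Finset.Nat.sum_antidiagonal_eq_sum_range_succ_mk] at this
  simp only [Polynomial.coeff_coe, coeff_prod_mk] at this
  rw [this]
  simp [PowerSeries.coeff_one]

lemma reflect_one_sub (a : R) :
    Polynomial.reflect 1 (1 - Polynomial.C a * Polynomial.X) = Polynomial.X - Polynomial.C a := by
  have h1 : (1 - Polynomial.C a * Polynomial.X : R[X])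
      = Polynomial.C 1 * Polynomial.X ^ 0 - Polynomial.C a * Polynomial.X ^ 1 := by simp
  rw [h1, Polynomial.reflect_sub, Polynomial.reflect_C_mul_X_pow, Polynomial.reflect_C_mul_X_pow]
  simp [Polynomial.revAt_le]

lemma prod_reflect {ι : Type*} (s : Finset ι) (r : ι → R) :
    ∏ i ∈ s, (Polynomial.X - Polynomial.C (r i))
      = Polynomial.reflect s.card (∏ i ∈ s, (1 - Polynomial.C (r i) * Polynomial.X)) := by
  classical
  induction s using Finset.induction with
  | empty => simp
  | insert a s' h ih =>
    rw [Finset.prod_insert h, Finset.prod_insert h, Finset.card_insert_of_notMem h, ih]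
    have hd1 : (1 - Polynomial.C (r a) * Polynomial.X : R[X]).natDegree ≤ 1 := by
      refine le_trans (Polynomial.natDegree_sub_le _ _) ?_
      simp only [Polynomial.natDegree_one, max_le_iff]
      exact ⟨Nat.zero_le 1, le_trans (Polynomial.natDegree_C_mul_le _ _) Polynomial.natDegree_X_le⟩
    have hd2 : (∏ i ∈ s', (1 - Polynomial.C (r i) * Polynomial.X) : R[X]).natDegree ≤ s'.card := by
      refine le_trans (Polynomial.natDegree_prod_le _ _) ?_
      refine le_trans (Finset.sum_le_card_nsmul _ _ 1 ?_) (by simp)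
      intro i _
      refine le_trans (Polynomial.natDegree_sub_le _ _) ?_
      simp only [Polynomial.natDegree_one, max_le_iff]
      exact ⟨Nat.zero_le 1, le_trans (Polynomial.natDegree_C_mul_le _ _) Polynomial.natDegree_X_le⟩
    rw [show s'.card + 1 = 1 + s'.card by omega, Polynomial.reflect_mul _ _ hd1 hd2,
      reflect_one_sub]

lemma root_rel (n : ℕ) (t : Fin n → R) (i : Fin n) :
    ∑ k ∈ Finset.range (n + 1),
      (∏ j : Fin n, (1 - Polynomial.C (t j) * Polynomial.X)).coeff k * t i ^ (n - k) = 0 := by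
  set P : R[X] := ∏ j : Fin n, (1 - Polynomial.C (t j) * Polynomial.X) with hP
  set Q : R[X] := ∏ j : Fin n, (Polynomial.X - Polynomial.C (t j)) with hQ
  have hQP : Q = Polynomial.reflect n P := by
    rw [hQ, hP]
    simpa using prod_reflect Finset.univ t
  have hdeg : Q.natDegree < n + 1 := by
    refine Nat.lt_succ_of_le (le_trans (Polynomial.natDegree_prod_le _ _) ?_)
    refine le_trans (Finset.sum_le_card_nsmul _ _ 1 fun j _ => Polynomial.natDegree_X_sub_C_le _)
      (by simp)
  have heval : Q.eval (t i) = 0 := by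
    rw [hQ, Polynomial.eval_prod]
    exact Finset.prod_eq_zero (Finset.mem_univ i) (by simp)
  rw [Polynomial.eval_eq_sum_range' hdeg] at heval
  rw [← Finset.sum_range_reflect] at heval
  rw [← heval]
  refine Finset.sum_congr rfl fun k hk => ?_
  rw [Finset.mem_range] at hk
  rw [hQP, Polynomial.coeff_reflect, Polynomial.revAt_le (by omega)]
  congr 2
  omega

lemma coeff_zero_P (n : ℕ) (t : Fin n → R) :
    (∏ j : Fin n, (1 - Polynomial.C (t j) * Polynomial.X)).coeff 0 = 1 := by
  rw [Polynomial.coeff_zero_prod]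
  exact Finset.prod_eq_one fun j _ => by simp

lemma coeff_P_eq_zero (n : ℕ) (t : Fin n → R) {k : ℕ} (hk : n < k) :
    (∏ j : Fin n, (1 - Polynomial.C (t j) * Polynomial.X)).coeff k = 0 := by
  refine Polynomial.coeff_eq_zero_of_natDegree_lt (lt_of_le_of_lt ?_ hk)
  refine le_trans (Polynomial.natDegree_prod_le _ _) ?_
  refine le_trans (Finset.sum_le_card_nsmul _ _ 1 ?_) (by simp)
  intro j _
  refine le_trans (Polynomial.natDegree_sub_le _ _) ?_
  simp only [Polynomial.natDegree_one, max_le_iff]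
  exact ⟨Nat.zero_le 1, le_trans (Polynomial.natDegree_C_mul_le _ _) Polynomial.natDegree_X_le⟩

end Aux

/-- Generalized Vandermonde determinant: if `F` is the `n×n` matrix whose `i`-th row is
`(1, t_i, t_i², …, t_i^{n-2}, t_i^p)` with `p ≥ n-1`, then
`det F = h_{p+1-n}(t_1, …, t_n) · ∏_{i<j} (t_j - t_i)`. -/
theorem stmt_15 {R : Type*} [CommRing R] (n : ℕ) (hn : 2 ≤ n) (t : Fin n → R)
    (p : ℕ) (hp : n - 1 ≤ p) :
    (Matrix.of fun i j : Fin n => if (j : ℕ) = n - 1 then t i ^ p else t i ^ (j : ℕ)).det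
      = hsym t (p + 1 - n) * ∏ i : Fin n, ∏ j ∈ Finset.Ioi i, (t j - t i) := by
  set V : R := ∏ i : Fin n, ∏ j ∈ Finset.Ioi i, (t j - t i) with hV
  set P : Polynomial R := ∏ j : Fin n, (1 - Polynomial.C (t j) * Polynomial.X) with hPdef
  have hn1 : n - 1 < n := by omega
  set lastIdx : Fin n := ⟨n - 1, hn1⟩ with hlast
  have key : ∀ c : Fin n → R,
      (Matrix.of fun i j : Fin n => if (j : ℕ) = n - 1 then c i else t i ^ (j : ℕ))
        = (Matrix.vandermonde t).updateCol lastIdx c := by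
    intro c
    ext i j
    rw [Matrix.updateCol_apply]
    by_cases hj : j = lastIdx
    · subst hj
      simp [Matrix.of_apply, hlast]
    · have hj' : (j : ℕ) ≠ n - 1 := fun h => hj (Fin.ext h)
      simp [Matrix.of_apply, hj, hj', Matrix.vandermonde]
  have hsmul : ∀ (c : R) (u : Fin n → R),
      ((Matrix.vandermonde t).updateCol lastIdx (fun i => c * u i)).det
        = c * ((Matrix.vandermonde t).updateCol lastIdx u).det := by
    intro c u
    rw [show (fun i => c * u i) = c • u from rfl, Matrix.det_updateCol_smul]
  have main : ∀ e : ℕ, ((Matrix.vandermonde t).updateCol lastIdx (fun i => t i ^ e)).det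
      = (if n - 1 ≤ e then hsym t (e + 1 - n) else 0) * V := by
    intro e
    induction e using Nat.strong_induction_on with
    | _ e ih =>
      rcases lt_trichotomy e (n - 1) with h1 | h2 | h3
      · rw [if_neg (by omega), zero_mul]
        have hene : e < n := by omega
        refine Matrix.det_zero_of_column_eq (i := lastIdx) (j := ⟨e, hene⟩)
          (fun h => by simp [hlast, Fin.ext_iff] at h; omega) ?_
        intro k
        rw [Matrix.updateCol_self, Matrix.updateCol_ne (by simp [hlast, Fin.ext_iff]; omega)]
        simp [Matrix.vandermonde]
      · have hmx : (Matrix.vandermonde t).updateCol lastIdx (fun i => t i ^ e)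
            = Matrix.vandermonde t := by
          ext i j
          rw [Matrix.updateCol_apply]
          by_cases hj : j = lastIdx
          · subst hj; simp [Matrix.vandermonde, hlast, h2]
          · simp [hj]
        rw [hmx, Matrix.det_vandermonde, if_pos (by omega), show e + 1 - n = 0 by omega]
        have h0 : hsym t 0 = 1 := by
          simp [hsym, Finset.Nat.antidiagonalTuple_zero_right]
        rw [h0, one_mul, hV]
      · have hen : n ≤ e := by omega
        have hcol : (fun i => t i ^ e)
            = fun i => ∑ k ∈ Finset.range n, (-(P.coeff (k + 1))) * t i ^ (e - (k + 1)) := by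
          funext i
          have h0 := root_rel n t i
          rw [← hPdef] at h0
          have h1 : ∑ k ∈ Finset.range (n + 1), P.coeff k * t i ^ (e - k) = 0 := by
            have h2 := congrArg (· * t i ^ (e - n)) h0
            simp only [Finset.sum_mul, zero_mul] at h2
            rw [← h2]
            refine Finset.sum_congr rfl fun k hk => ?_
            rw [Finset.mem_range] at hk
            rw [mul_assoc, ← pow_add]
            congr 2
            omega
          rw [Finset.sum_range_succ'] at h1
          have hc0 : P.coeff 0 = 1 := by rw [hPdef]; exact coeff_zero_P n t
          rw [hc0, one_mul, Nat.sub_zero] at h1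
          have := eq_neg_of_add_eq_zero_right h1
          rw [this, neg_eq_iff_eq_neg, ← Finset.sum_neg_distrib]
          exact Finset.sum_congr rfl fun k _ => by ring
        rw [hcol, det_updateColumn_sum]
        have hterm : ∀ k ∈ Finset.range n,
            ((Matrix.vandermonde t).updateCol lastIdx
                (fun i => (-(P.coeff (k + 1))) * t i ^ (e - (k + 1)))).det
              = (-(P.coeff (k + 1)))
                  * ((if n - 1 ≤ e - (k + 1) then hsym t (e - (k + 1) + 1 - n) else 0) * V) := by
          intro k _
          rw [hsmul, ih _ (by omega)]
        rw [Finset.sum_congr rfl hterm, if_pos (by omega)]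
        set m : ℕ := e + 1 - n with hm
        have hm1 : 1 ≤ m := by omega
        -- the h recurrence
        have hrec := h_rec n t m
        rw [← hPdef, if_neg (by omega)] at hrec
        have hrec' : ∀ k, (∑ d ∈ Finset.Nat.antidiagonalTuple n (m - k), ∏ i, t i ^ d i)
            = hsym t (m - k) := fun k => rfl
        simp only [hrec'] at hrec
        rw [Finset.sum_range_succ'] at hrec
        have hc0 : P.coeff 0 = 1 := by rw [hPdef]; exact coeff_zero_P n t
        rw [hc0, one_mul, Nat.sub_zero] at hrec
        have hsymm : hsym t m = ∑ k ∈ Finset.range m,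
            (-(P.coeff (k + 1))) * hsym t (m - (k + 1)) := by
          have := eq_neg_of_add_eq_zero_right hrec
          rw [this, ← Finset.sum_neg_distrib]
          exact Finset.sum_congr rfl fun k _ => by ring
        -- match the two sums
        set F : ℕ → R := fun k => (-(P.coeff (k + 1)))
            * (if n - 1 ≤ e - (k + 1) then hsym t (e - (k + 1) + 1 - n) else 0) with hF
        have lhs_eq : ∑ k ∈ Finset.range n, F k = ∑ k ∈ Finset.range (n + m), F k := by
          refine Finset.sum_subset (Finset.range_subset_range.2 (by omega)) ?_
          intro k _ hk
          rw [Finset.mem_range, not_lt] at hk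
          have : P.coeff (k + 1) = 0 := by rw [hPdef]; exact coeff_P_eq_zero n t (by omega)
          simp [hF, this]
        have rhs_eq : ∑ k ∈ Finset.range m, (-(P.coeff (k + 1))) * hsym t (m - (k + 1))
            = ∑ k ∈ Finset.range (n + m), F k := by
          rw [show (∑ k ∈ Finset.range m, (-(P.coeff (k + 1))) * hsym t (m - (k + 1)))
              = ∑ k ∈ Finset.range m, F k from Finset.sum_congr rfl fun k hk => by
            rw [Finset.mem_range] at hk
            simp only [hF]
            rw [if_pos (show n - 1 ≤ e - (k + 1) by omega)]
            congr 2
            omega]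
          refine Finset.sum_subset (Finset.range_subset_range.2 (by omega)) ?_
          intro k _ hk
          rw [Finset.mem_range, not_lt] at hk
          simp only [hF]
          rw [if_neg (show ¬ n - 1 ≤ e - (k + 1) by omega), mul_zero]
        calc ∑ k ∈ Finset.range n, (-(P.coeff (k + 1)))
              * ((if n - 1 ≤ e - (k + 1) then hsym t (e - (k + 1) + 1 - n) else 0) * V)
            = (∑ k ∈ Finset.range n, F k) * V := by
              rw [Finset.sum_mul]
              exact Finset.sum_congr rfl fun k _ => by rw [hF, mul_assoc]
          _ = (∑ k ∈ Finset.range m, (-(P.coeff (k + 1))) * hsym t (m - (k + 1))) * V := by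
              rw [lhs_eq, rhs_eq]
          _ = hsym t m * V := by rw [← hsymm]
  rw [key, main p, if_pos hp]
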